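/- arXiv:2007.06728 — 7 statements merged into one kernel-verified Lean document; each statement's English description precedes it below -/
import Mathlib

section
/- In the transition graph of an EREW-adjacent pair of configurations, every vertex (post) has in-degree at most one and out-degree at most one. -/
/-- A configuration of `t` towers of `n` disks on `p` posts: entry `α u y` is the
post occupied by the `y`-th largest disk of color `u` (columns 0-indexed,
column `y` holds the disks of size index `y`). -/
abbrev Config (t n p : ℕ) := Fin t → Fin n → Fin p

/-- Validity: no two equal-sized disks share a post (column-wise injectivity). -/
def ValidConfig {t n p : ℕ} (α : Config t n p) : Prop :=
  ∀ y : Fin n, Function.Injective fun u => α u y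

/-- EREW-adjacency: at least one disk moves, and every moved disk is topmost at
its source beforehand and at its destination afterwards. -/
def EREW {t n p : ℕ} (α β : Config t n p) : Prop :=
  α ≠ β ∧
    ∀ u j, α u j ≠ β u j →
      ∀ v : Fin t, ∀ y : Fin n, (j : ℕ) < (y : ℕ) →
        α v y ≠ α u j ∧ β v y ≠ β u j

/-- One step of a valid sequence: equal or EREW-adjacent configurations. -/
def Step {t n p : ℕ} (α β : Config t n p) : Prop := α = β ∨ EREW α β

/-- The set of disks moved between two configurations (the transfer vector:
each moved disk determines its source and destination posts). -/
def moves {t n p : ℕ} (α β : Config t n p) : Finset (Fin t × Fin n) :=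
  Finset.univ.filter fun d => α d.1 d.2 ≠ β d.1 d.2

/-- A valid sequence of configurations. -/
def ValidSeq {t n p : ℕ} (l : List (Config t n p)) : Prop :=
  (∀ α ∈ l, ValidConfig α) ∧ l.Chain' Step

/-- Transfer length of a configuration sequence: total number of disk moves. -/
def transferLength {t n p : ℕ} : List (Config t n p) → ℕ
  | [] => 0
  | [_] => 0
  | α :: β :: rest => (moves α β).card + transferLength (β :: rest)

/-- Containment in the cluster of grading `g·𝟏` determined by the placement `B`:
the configuration agrees with `B` on all columns of index `< g`. -/
def InCluster {t n p : ℕ} (g : ℕ) (B α : Config t n p) : Prop :=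
  ∀ u : Fin t, ∀ y : Fin n, (y : ℕ) < g → α u y = B u y

/-- The translative map onto the cluster of grading `g·𝟏` determined by `B`. -/
def T {t n p : ℕ} (g : ℕ) (B : Config t n p) (α : Config t n p) : Config t n p :=
  fun u y => if (y : ℕ) < g then B u y else α u y

/-- The reflective map swapping posts `q` and `r` on all columns of index `≥ g`. -/
def R {t n p : ℕ} (g : ℕ) (q r : Fin p) (α : Config t n p) : Config t n p :=
  fun u y => if g ≤ (y : ℕ) then
    (if α u y = q then r else if α u y = r then q else α u y) else α u y

/-- in the transition graph of an EREW-adjacent pair, every post has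
in-degree at most one and out-degree at most one. -/
theorem transition_graph_degree_le_one {t n p : ℕ} (α β : Config t n p)
    (hα : ValidConfig α) (hβ : ValidConfig β) (h : EREW α β) (q : Fin p) :
    ((moves α β).filter fun d => α d.1 d.2 = q).card ≤ 1 ∧
    ((moves α β).filter fun d => β d.1 d.2 = q).card ≤ 1 := by
  constructor <;>
  · apply Finset.card_le_one.mpr
    rintro ⟨u, j⟩ hd ⟨v, k⟩ he
    simp only [moves, Finset.mem_filter, Finset.mem_univ, true_and] at hd he
    obtain ⟨hmd, hqd⟩ := hd
    obtain ⟨hme, hqe⟩ := he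
    rcases lt_trichotomy (j : ℕ) (k : ℕ) with hlt | heq | hlt
    · first
      | exact absurd (hqe.trans hqd.symm) (h.2 u j hmd v k hlt).1
      | exact absurd (hqe.trans hqd.symm) (h.2 u j hmd v k hlt).2
    · have hjk : j = k := Fin.ext heq
      subst hjk
      have : u = v := by
        first
        | exact hα j (hqd.trans hqe.symm)
        | exact hβ j (hqd.trans hqe.symm)
      simp [this]
    · first
      | exact absurd (hqd.trans hqe.symm) (h.2 v k hme u j hlt).1
      | exact absurd (hqd.trans hqe.symm) (h.2 v k hme u j hlt).2
end

section
/- Translative maps preserve valid sequences: if π = (α_1, ..., α_w) is a valid sequence of configurations (each consecutive pair is either equal or EREW-adjacent), and B is a cluster of grading g·𝟏, then the image sequence (T_B(α_1), ..., T_B(α_w)) is a valid sequence of configurations, each contained in B; moreover, for each v, either T_B(α_v) = T_B(α_{v+1}) or they are EREW-adjacent with transfer vector a subset of the transfer vector of (α_v, α_{v+1}). -/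
lemma T_valid {t n p : ℕ} (g : ℕ) (B : Config t n p) (hB : ValidConfig B)
    {α : Config t n p} (hα : ValidConfig α) : ValidConfig (T g B α) := by
  intro y u v h
  simp only [T] at h
  by_cases hy : (y : ℕ) < g
  · simp only [if_pos hy] at h; exact hB y h
  · simp only [if_neg hy] at h; exact hα y h

lemma step_strong {t n p : ℕ} (g : ℕ) (B : Config t n p) {α β : Config t n p}
    (h : Step α β) :
    T g B α = T g B β ∨
      (EREW (T g B α) (T g B β) ∧ moves (T g B α) (T g B β) ⊆ moves α β) := by
  rcases h with rfl | ⟨_, hE⟩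
  · left; rfl
  by_cases hT : T g B α = T g B β
  · left; exact hT
  right
  have key : ∀ u j, T g B α u j ≠ T g B β u j → ¬ (j : ℕ) < g ∧ α u j ≠ β u j := by
    intro u j hd
    by_cases hj : (j : ℕ) < g
    · simp [T, hj] at hd
    · simp only [T, if_neg hj] at hd; exact ⟨hj, hd⟩
  refine ⟨⟨hT, ?_⟩, ?_⟩
  · intro u j hdiff v y hy
    obtain ⟨hj, hab⟩ := key u j hdiff
    have hyg : ¬ (y : ℕ) < g := by omega
    simp only [T, if_neg hj, if_neg hyg]
    exact hE u j hab v y hy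
  · intro d hd
    simp only [moves, Finset.mem_filter, Finset.mem_univ, true_and] at hd ⊢
    exact (key d.1 d.2 hd).2

/-- translative maps send valid sequences to valid sequences
contained in the cluster, with consecutive images equal or EREW-adjacent with a
transfer vector contained in the original one. -/
theorem translative_preserves_seq {t n p : ℕ} (g : ℕ) (B : Config t n p)
    (hB : ValidConfig B) (l : List (Config t n p)) (hl : ValidSeq l) :
    ValidSeq (l.map (T g B)) ∧
    (∀ α ∈ l.map (T g B), InCluster g B α) ∧
    l.Chain' (fun α β => T g B α = T g B β ∨
      (EREW (T g B α) (T g B β) ∧ moves (T g B α) (T g B β) ⊆ moves α β)) := by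
  obtain ⟨hval, hchain⟩ := hl
  have hstrong : l.Chain' (fun α β => T g B α = T g B β ∨
      (EREW (T g B α) (T g B β) ∧ moves (T g B α) (T g B β) ⊆ moves α β)) :=
    hchain.imp fun {a b} h => step_strong g B h
  refine ⟨⟨?_, ?_⟩, ?_, hstrong⟩
  · intro α hα
    obtain ⟨β, hβ, rfl⟩ := List.mem_map.mp hα
    exact T_valid g B hB (hval β hβ)
  · rw [List.Chain', List.isChain_map]
    exact hstrong.imp fun {a b} h => h.imp id And.left
  · intro α hα
    obtain ⟨β, _, rfl⟩ := List.mem_map.mp hα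
    intro u y hy
    simp [T, hy]
end

section
/- Reflective maps preserve valid sequences within a cluster: if π = (α_1, ..., α_w) is a valid sequence of configurations all contained in a cluster B of grading (g−1)·𝟏 (so no disk of size index < g moves and all such disks occupy fixed posts), then for any posts q, r, the image sequence under the reflective map R^g_{q,r} (swapping posts q and r among all disks of index ≥ g) is a valid sequence of configurations contained in B; moreover each consecutive pair in the image is either equal or EREW-adjacent with a transfer vector of the same cardinality. -/
lemma R_apply' {t n p : ℕ} (g : ℕ) (q r : Fin p) (α : Config t n p) (u : Fin t) (y : Fin n) :
    R g q r α u y = if g ≤ (y : ℕ) then Equiv.swap q r (α u y) else α u y := by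
  simp [R, Equiv.swap_apply_def]

lemma R_ne_iff {t n p : ℕ} {g : ℕ} {q r : Fin p} {α β : Config t n p}
    (u : Fin t) (y : Fin n) :
    R g q r α u y ≠ R g q r β u y ↔ α u y ≠ β u y := by
  rw [R_apply', R_apply']
  by_cases h : g ≤ (y : ℕ)
  · simp [h, (Equiv.swap q r).injective.ne_iff]
  · simp [h]

lemma moves_R {t n p : ℕ} (g : ℕ) (q r : Fin p) (α β : Config t n p) :
    moves (R g q r α) (R g q r β) = moves α β := by
  ext d
  simp [moves, R_ne_iff]

lemma R_valid {t n p : ℕ} (g : ℕ) (q r : Fin p) {α : Config t n p}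
    (hα : ValidConfig α) : ValidConfig (R g q r α) := by
  intro y
  by_cases h : g ≤ (y : ℕ)
  · intro u v huv
    simp only [R_apply', if_pos h] at huv
    exact hα y ((Equiv.swap q r).injective huv)
  · simpa [R_apply', h] using hα y

lemma R_inCluster {t n p : ℕ} {g : ℕ} {B : Config t n p} (q r : Fin p)
    {α : Config t n p} (hα : InCluster g B α) : InCluster g B (R g q r α) := by
  intro u y hy
  rw [R_apply', if_neg (Nat.not_le.mpr hy)]
  exact hα u y hy

lemma EREW_R {t n p : ℕ} {g : ℕ} {B : Config t n p} {q r : Fin p}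
    {α β : Config t n p} (hα : InCluster g B α) (hβ : InCluster g B β)
    (h : EREW α β) : EREW (R g q r α) (R g q r β) := by
  obtain ⟨hne, htop⟩ := h
  constructor
  · have : ∃ u y, α u y ≠ β u y := by
      by_contra hc
      push_neg at hc
      exact hne (funext fun u => funext fun y => hc u y)
    obtain ⟨u, y, hy⟩ := this
    intro he
    exact (R_ne_iff u y).mpr hy (by rw [he])
  · intro u j hj v y hlt
    have huj : α u j ≠ β u j := (R_ne_iff u j).mp hj
    have hg : g ≤ (j : ℕ) := by
      by_contra hgj
      push_neg at hgj
      exact huj (by rw [hα u j hgj, hβ u j hgj])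
    have hgy : g ≤ (y : ℕ) := hg.trans hlt.le
    obtain ⟨h1, h2⟩ := htop u j huj v y hlt
    constructor
    · rw [R_apply', R_apply', if_pos hg, if_pos hgy]
      exact fun e => h1 ((Equiv.swap q r).injective e)
    · rw [R_apply', R_apply', if_pos hg, if_pos hgy]
      exact fun e => h2 ((Equiv.swap q r).injective e)

lemma chain_R {t n p : ℕ} {g : ℕ} {B : Config t n p} (q r : Fin p) :
    ∀ (l : List (Config t n p)), l.Chain' Step → (∀ α ∈ l, InCluster g B α) →
      l.Chain' (fun α β => R g q r α = R g q r β ∨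
        (EREW (R g q r α) (R g q r β) ∧
          (moves (R g q r α) (R g q r β)).card = (moves α β).card))
  | [], _, _ => List.isChain_nil
  | [_], _, _ => List.isChain_singleton _
  | a :: b :: l, hc, hcl => by
    unfold List.Chain' at hc ⊢
    rw [List.isChain_cons_cons] at hc ⊢
    refine ⟨?_, chain_R q r (b :: l) hc.2 (fun x hx => hcl x (List.mem_cons_of_mem a hx))⟩
    rcases hc.1 with h | h
    · exact Or.inl (by rw [h])
    · exact Or.inr ⟨EREW_R (hcl a (by simp)) (hcl b (by simp)) h,
        by rw [moves_R]⟩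

/-- reflective maps preserve valid sequences contained in a cluster
of grading `g·𝟏`; consecutive images are equal or EREW-adjacent with a transfer
vector of the same cardinality. -/
theorem reflective_preserves_seq {t n p : ℕ} (g : ℕ) (B : Config t n p)
    (q r : Fin p) (l : List (Config t n p)) (hl : ValidSeq l)
    (hcl : ∀ α ∈ l, InCluster g B α) :
    ValidSeq (l.map (R g q r)) ∧
    (∀ α ∈ l.map (R g q r), InCluster g B α) ∧
    l.Chain' (fun α β => R g q r α = R g q r β ∨
      (EREW (R g q r α) (R g q r β) ∧
        (moves (R g q r α) (R g q r β)).card = (moves α β).card)) := by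
  have hP := chain_R (B := B) q r l hl.2 hcl
  refine ⟨⟨?_, ?_⟩, ?_, hP⟩
  · intro α hα
    obtain ⟨β, hβ, rfl⟩ := List.mem_map.mp hα
    exact R_valid g q r (hl.1 β hβ)
  · unfold List.Chain'
    rw [List.isChain_map]
    exact hP.imp fun _ _ h => h.elim Or.inl (fun h => Or.inr h.1)
  · intro α hα
    obtain ⟨β, hβ, rfl⟩ := List.mem_map.mp hα
    exact R_inCluster q r (hcl β hβ)
end

section
/- (Acyclicity of minimal walks over clusters.) Let A be a cluster of grading g·𝟏 and let α, β be configurations contained in A. Then every configuration sequence connecting α and β of minimal transfer length is entirely contained in A. Equivalently: for any valid sequence ν from α to β that leaves A, there exists a valid sequence μ from α to β contained in A with strictly smaller transfer length. -/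
section Aux

variable {t n p : ℕ} (g : ℕ) (A : Config t n p)

lemma T_eq_of_inCluster {α : Config t n p} (h : InCluster g A α) : T g A α = α := by
  funext u y
  simp only [T]
  split
  · exact (h u y (by assumption)).symm
  · rfl

lemma inCluster_T (α : Config t n p) : InCluster g A (T g A α) := by
  intro u y hy; simp [T, hy]

lemma validConfig_T (hA : ValidConfig A) {α : Config t n p} (h : ValidConfig α) :
    ValidConfig (T g A α) := by
  intro y u v huv
  simp only [T] at huv
  split at huv
  · exact hA y huv
  · exact h y huv

lemma moves_T_subset (α β : Config t n p) :
    moves (T g A α) (T g A β) ⊆ moves α β := by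
  intro d hd
  simp only [moves, Finset.mem_filter, Finset.mem_univ, true_and] at hd ⊢
  simp only [T] at hd
  split at hd
  · exact absurd rfl hd
  · exact hd

lemma step_T {α β : Config t n p} (h : Step α β) : Step (T g A α) (T g A β) := by
  rcases h with h | h
  · exact Or.inl (by rw [h])
  · by_cases heq : T g A α = T g A β
    · exact Or.inl heq
    · refine Or.inr ⟨heq, ?_⟩
      intro u j hj v y hy
      simp only [T] at hj
      split at hj
      · exact absurd rfl hj
      · rename_i hg
        have hyg : ¬ (y : ℕ) < g := by omega
        simp only [T, if_neg hg, if_neg hyg]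
        exact h.2 u j hj v y hy

lemma moves_card_lt {α β : Config t n p} (hα : InCluster g A α)
    (hβ : ¬ InCluster g A β) :
    (moves (T g A α) (T g A β)).card < (moves α β).card := by
  apply Finset.card_lt_card
  refine ⟨moves_T_subset g A α β, fun hsub => ?_⟩
  simp only [InCluster] at hβ
  push_neg at hβ
  obtain ⟨u, y, hy, hne⟩ := hβ
  have hmem : (u, y) ∈ moves α β := by
    simp only [moves, Finset.mem_filter, Finset.mem_univ, true_and]
    rw [hα u y hy]
    exact fun h => hne h.symm
  have := hsub hmem
  simp only [moves, Finset.mem_filter, Finset.mem_univ, true_and] at this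
  simp only [T, if_pos hy] at this
  exact this rfl

lemma tl_map_le (l : List (Config t n p)) :
    transferLength (l.map (T g A)) ≤ transferLength l := by
  match l with
  | [] => simp [transferLength]
  | [a] => simp [transferLength]
  | a :: b :: rest =>
    simp only [List.map_cons, transferLength]
    exact Nat.add_le_add (Finset.card_le_card (moves_T_subset g A a b))
      (tl_map_le (b :: rest))

lemma tl_map_lt (l : List (Config t n p)) (γ : Config t n p)
    (hγ : InCluster g A γ) (hbad : ∃ δ ∈ l, ¬ InCluster g A δ) :
    transferLength ((γ :: l).map (T g A)) < transferLength (γ :: l) := by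
  match l with
  | [] => simp at hbad
  | δ :: rest =>
    simp only [List.map_cons, transferLength]
    by_cases hδ : InCluster g A δ
    · have hbad' : ∃ ε ∈ rest, ¬ InCluster g A ε := by
        obtain ⟨ε, hε, hεb⟩ := hbad
        rcases List.mem_cons.mp hε with rfl | h
        · exact absurd hδ hεb
        · exact ⟨ε, h, hεb⟩
      have := tl_map_lt rest δ hδ hbad'
      simp only [List.map_cons] at this
      exact Nat.add_lt_add_of_le_of_lt
        (Finset.card_le_card (moves_T_subset g A γ δ)) this
    · exact Nat.add_lt_add_of_lt_of_le (moves_card_lt g A hγ hδ)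
        (tl_map_le g A (δ :: rest))

end Aux

/-- acyclicity of minimal walks over clusters: if a valid sequence
from `α` to `β` (both contained in the cluster `A` of grading `g·𝟏`) leaves `A`,
then there is a valid sequence from `α` to `β` contained in `A` of strictly
smaller transfer length; hence every minimal sequence is contained in `A`. -/
theorem acyclicity_of_minimal_walks {t n p : ℕ} (g : ℕ) (A : Config t n p)
    (hA : ValidConfig A) (α β : Config t n p)
    (hα : InCluster g A α) (hβ : InCluster g A β)
    (ν : List (Config t n p)) (hν : ValidSeq ν)
    (hhead : ν.head? = some α) (hlast : ν.getLast? = some β)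
    (hleaves : ∃ γ ∈ ν, ¬ InCluster g A γ) :
    ∃ μ : List (Config t n p), ValidSeq μ ∧
      μ.head? = some α ∧ μ.getLast? = some β ∧
      (∀ γ ∈ μ, InCluster g A γ) ∧
      transferLength μ < transferLength ν := by
  refine ⟨ν.map (T g A), ⟨?_, ?_⟩, ?_, ?_, ?_, ?_⟩
  · intro γ hγ
    obtain ⟨δ, hδ, rfl⟩ := List.mem_map.mp hγ
    exact validConfig_T g A hA (hν.1 δ hδ)
  · rw [List.Chain', List.isChain_map]
    exact List.IsChain.imp (fun a b h => step_T g A h) hν.2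
  · rw [List.head?_map, hhead, Option.map_some, T_eq_of_inCluster g A hα]
  · rw [List.getLast?_map, hlast, Option.map_some, T_eq_of_inCluster g A hβ]
  · intro γ hγ
    obtain ⟨δ, hδ, rfl⟩ := List.mem_map.mp hγ
    exact inCluster_T g A δ
  · obtain ⟨γ₀, hγ₀, hγ₀b⟩ := hleaves
    match ν, hhead with
    | a :: l, hhead =>
      have ha : a = α := by simpa using hhead
      subst α
      have hbad : ∃ δ ∈ l, ¬ InCluster g A δ := by
        rcases List.mem_cons.mp hγ₀ with rfl | h
        · exact absurd hα hγ₀b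
        · exact ⟨γ₀, h, hγ₀b⟩
      exact tl_map_lt g A l a hα hbad
end

section
/- Junction lemma for the reflective map: let γ and β be EREW-adjacent configurations with transfer vector 𝐣 containing the move of disk (v,g) from post c to post b, where all disks of index < g are static and occupy posts different from b and c. Then R^g_{b,c}(γ) and β are either equal or EREW-adjacent with a transfer vector 𝐢 of strictly smaller cardinality than 𝐣; in particular, the move of disk (v,g) is eliminated. -/
/-- junction lemma for the reflective map: if `γ` and `β` are
EREW-adjacent, disk `(v,g)` moves from `c` to `b`, and all disks of index `< g`
are static on posts different from `b` and `c`, then `R^g_{b,c}(γ)` and `β` are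
equal or EREW-adjacent, with strictly fewer moves; in particular the move of
disk `(v,g)` is eliminated. -/
theorem junction_lemma {t n p : ℕ} (v : Fin t) (d : Fin n) (b c : Fin p)
    (hbc : b ≠ c) (γ β : Config t n p)
    (hγ : ValidConfig γ) (hβ : ValidConfig β) (h : EREW γ β)
    (hsrc : γ v d = c) (hdst : β v d = b)
    (hstatic : ∀ u : Fin t, ∀ y : Fin n, (y : ℕ) < (d : ℕ) →
      γ u y = β u y ∧ γ u y ≠ b ∧ γ u y ≠ c) :
    (R (d : ℕ) b c γ = β ∨ EREW (R (d : ℕ) b c γ) β) ∧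
    (moves (R (d : ℕ) b c γ) β).card < (moves γ β).card ∧
    (R (d : ℕ) b c γ) v d = β v d := by
  classical
  set σ : Fin p → Fin p := fun x => if x = b then c else if x = c then b else x with hσ
  have hσfix : ∀ x : Fin p, x ≠ b → x ≠ c → σ x = x := by
    intro x h1 h2; simp [hσ, h1, h2]
  have hσinv : ∀ x : Fin p, σ (σ x) = x := by
    intro x
    by_cases h1 : x = b
    · simp [hσ, h1, hbc, hbc.symm]
    · by_cases h2 : x = c
      · simp [hσ, h1, h2, hbc, hbc.symm]
      · simp [hσ, h1, h2]
  have hσinj : Function.Injective σ := Function.LeftInverse.injective hσinv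
  have hR : ∀ u : Fin t, ∀ y : Fin n, (d : ℕ) ≤ (y : ℕ) → R (d : ℕ) b c γ u y = σ (γ u y) := by
    intro u y hy; simp [R, hσ, hy]
  have hRlt : ∀ u : Fin t, ∀ y : Fin n, ¬ (d : ℕ) ≤ (y : ℕ) → R (d : ℕ) b c γ u y = γ u y := by
    intro u y hy; simp [R, hy]
  have hmovevd : γ v d ≠ β v d := by rw [hsrc, hdst]; exact hbc.symm
  have htop := h.2 v d hmovevd
  -- for y > d: γ w y ≠ c and β w y ≠ b
  have htop' : ∀ w : Fin t, ∀ y : Fin n, (d : ℕ) < (y : ℕ) → γ w y ≠ c ∧ β w y ≠ b := by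
    intro w y hy
    have := htop w y hy
    rwa [hsrc, hdst] at this
  -- third conclusion
  have hvd : R (d : ℕ) b c γ v d = β v d := by
    rw [hR v d le_rfl, hsrc, hdst]
    simp [hσ, hbc.symm]
  -- key: a move of R γ vs β implies a move of γ vs β, in a column ≥ d
  have hkey : ∀ u : Fin t, ∀ j : Fin n, R (d : ℕ) b c γ u j ≠ β u j →
      γ u j ≠ β u j ∧ (d : ℕ) ≤ (j : ℕ) := by
    intro u j hne
    by_cases hj : (d : ℕ) ≤ (j : ℕ)
    · refine ⟨?_, hj⟩
      intro heq
      apply hne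
      rw [hR u j hj]
      rcases lt_or_eq_of_le hj with hj' | hj'
      · obtain ⟨h1, h2⟩ := htop' u j hj'
        rw [heq] at h1 ⊢
        rw [hσfix _ h2 h1]
      · have hjd : j = d := Fin.ext hj'.symm
        subst hjd
        have huv : u ≠ v := by
          intro huv; subst huv
          exact hmovevd heq
        have h1 : γ u j ≠ c := by
          intro hc; exact huv (hγ j (by simpa [hsrc] using hc))
        have h2 : β u j ≠ b := by
          intro hb; exact huv (hβ j (by simpa [hdst] using hb))
        rw [heq] at h1 ⊢
        exact hσfix _ h2 h1
    · exfalso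
      apply hne
      rw [hRlt u j hj, (hstatic u j (not_le.mp hj)).1]
  have hsub : moves (R (d : ℕ) b c γ) β ⊆ moves γ β := by
    intro x hx
    simp only [moves, Finset.mem_filter, Finset.mem_univ, true_and] at hx ⊢
    exact (hkey x.1 x.2 hx).1
  have hvd_in : (v, d) ∈ moves γ β := by
    simp only [moves, Finset.mem_filter, Finset.mem_univ, true_and]
    exact hmovevd
  have hvd_out : (v, d) ∉ moves (R (d : ℕ) b c γ) β := by
    simp only [moves, Finset.mem_filter, Finset.mem_univ, true_and, not_not]
    exact hvd
  have hcard : (moves (R (d : ℕ) b c γ) β).card < (moves γ β).card :=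
    Finset.card_lt_card ⟨hsub, fun hs => hvd_out (hs hvd_in)⟩
  refine ⟨?_, hcard, hvd⟩
  by_cases heq : R (d : ℕ) b c γ = β
  · exact Or.inl heq
  · refine Or.inr ⟨heq, ?_⟩
    intro u j hne w y hlt
    obtain ⟨hmv, hjd⟩ := hkey u j hne
    obtain ⟨hg, hb⟩ := h.2 u j hmv w y hlt
    refine ⟨?_, hb⟩
    rw [hR u j hjd, hR w y (hjd.trans hlt.le)]
    exact fun hcontra => hg (hσinj hcontra)
end

section
/- If a valid configuration sequence ν from α to β leaves the common cluster A of grading g·𝟏 containing both α and β, then ν moves some disk of size index ≤ g at least twice (i.e., at least two transitions in ν each move at least one disk of index ≤ g). -/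
lemma exists_change_aux {X : Type*} (f : ℕ → X) (a b : ℕ) (hab : a ≤ b)
    (h : f a ≠ f b) : ∃ i, a ≤ i ∧ i < b ∧ f i ≠ f (i + 1) := by
  by_contra hc
  push_neg at hc
  apply h
  clear h
  induction b, hab using Nat.le_induction with
  | base => rfl
  | succ b hb ih =>
    have h1 : f a = f b := ih fun i hi hib => hc i hi (by omega)
    have h2 : f b = f (b + 1) := hc b hb (by omega)
    rw [h1, h2]

/-- a valid sequence from `α` to `β`, both in the cluster `A` of
grading `g·𝟏`, that leaves `A` must move some disk of index `≤ g` at least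
twice: at least two distinct transitions each move a disk of index `≤ g`. -/
theorem leaves_cluster_two_small_moves {t n p : ℕ} (g : ℕ) (A : Config t n p)
    (α β : Config t n p) (hα : InCluster g A α) (hβ : InCluster g A β)
    (ν : List (Config t n p)) (hν : ValidSeq ν)
    (hhead : ν.head? = some α) (hlast : ν.getLast? = some β)
    (hleaves : ∃ γ ∈ ν, ¬ InCluster g A γ) :
    ∃ i j, i < j ∧ ∃ hi : i + 1 < ν.length, ∃ hj : j + 1 < ν.length,
      (∃ d ∈ moves (ν.get ⟨i, by omega⟩) (ν.get ⟨i + 1, hi⟩), (d.2 : ℕ) < g) ∧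
      (∃ d ∈ moves (ν.get ⟨j, by omega⟩) (ν.get ⟨j + 1, hj⟩), (d.2 : ℕ) < g) := by
  obtain ⟨γ, hγmem, hγ⟩ := hleaves
  simp only [InCluster, not_forall] at hγ
  obtain ⟨u, y, hy, hne⟩ := hγ
  obtain ⟨⟨k, hk⟩, hkγ⟩ := List.mem_iff_get.mp hγmem
  -- ν is nonempty; get first and last elements
  have hlen : 0 < ν.length := by omega
  have h0 : ν.get ⟨0, hlen⟩ = α := by
    cases ν with
    | nil => simp at hhead
    | cons a l => simpa using hhead
  have hL : ν.get ⟨ν.length - 1, by omega⟩ = β := by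
    have hne' : ν ≠ [] := List.ne_nil_of_length_pos hlen
    rw [List.getLast?_eq_getLast hne'] at hlast
    have := List.getLast_eq_getElem hne'
    rw [this] at hlast
    exact Option.some_injective _ hlast
  -- the trajectory of disk (u,y)
  set f : ℕ → Fin p := fun m => (ν.getD m γ) u y with hf
  have hget : ∀ m (hm : m < ν.length), f m = (ν.get ⟨m, hm⟩) u y := by
    intro m hm
    simp [hf, List.getD_eq_getElem?_getD, List.getElem?_eq_getElem hm]
  have hf0 : f 0 = A u y := by rw [hget 0 hlen, h0]; exact hα u y hy
  have hfk : f k ≠ A u y := by rw [hget k hk, hkγ]; exact hne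
  have hfL : f (ν.length - 1) = A u y := by
    rw [hget (ν.length - 1) (by omega), hL]; exact hβ u y hy
  obtain ⟨i, -, hik, hfi⟩ := exists_change_aux f 0 k (Nat.zero_le k)
    (by rw [hf0]; exact fun h => hfk h.symm)
  obtain ⟨j, hkj, hjL, hfj⟩ := exists_change_aux f k (ν.length - 1)
    (by omega) (by rw [hfL]; exact hfk)
  have hi : i + 1 < ν.length := by omega
  have hj : j + 1 < ν.length := by omega
  refine ⟨i, j, by omega, hi, hj, ⟨(u, y), ?_, hy⟩, ⟨(u, y), ?_, hy⟩⟩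
  · simp only [moves, Finset.mem_filter, Finset.mem_univ, true_and]
    rw [← hget i (by omega), ← hget (i + 1) hi]; exact hfi
  · simp only [moves, Finset.mem_filter, Finset.mem_univ, true_and]
    rw [← hget j (by omega), ← hget (j + 1) hj]; exact hfj
end

section
/- If configurations α and β are EREW-adjacent with transfer vector 𝐣, then the restriction of the moves in 𝐣 to disks of index > g, applied to the translated configurations T_A(α) and T_A(β) (for any cluster A of grading g·𝟏), yields: T_A(α) = T_A(β) if all moves in 𝐣 involve disks of index ≤ g, and otherwise T_A(α) and T_A(β) are EREW-adjacent with transfer vector exactly the set of moves in 𝐣 of disks of index > g. -/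
/-- for EREW-adjacent `α`, `β` with transfer vector `𝐣`, the
translated pair `T_A(α)`, `T_A(β)` is equal if all moves of `𝐣` involve disks of
index `≤ g`, and otherwise is EREW-adjacent with transfer vector exactly the set
of moves of `𝐣` of disks of index `> g`. -/
theorem translated_transfer_vector {t n p : ℕ} (g : ℕ) (A : Config t n p)
    (α β : Config t n p) (h : EREW α β) :
    ((∀ d ∈ moves α β, (d.2 : ℕ) < g) → T g A α = T g A β) ∧
    ((∃ d ∈ moves α β, g ≤ (d.2 : ℕ)) →
      EREW (T g A α) (T g A β) ∧
      moves (T g A α) (T g A β) =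
        (moves α β).filter fun d => g ≤ (d.2 : ℕ)) := by
  constructor
  · intro hall
    funext u y
    simp only [T]
    split
    · rfl
    · rename_i hy
      by_contra hne
      exact hy (hall (u, y) (by simpa [moves] using hne))
  · rintro ⟨d, hd, hdg⟩
    have hmem : α d.1 d.2 ≠ β d.1 d.2 := by simpa [moves] using hd
    have hTne : T g A α ≠ T g A β := by
      intro he
      apply hmem
      have := congrFun (congrFun he d.1) d.2
      simpa [T, not_lt.mpr hdg] using this
    refine ⟨⟨hTne, ?_⟩, ?_⟩
    · intro u j hj v y hjy
      simp only [T] at hj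
      by_cases hjg : (j : ℕ) < g
      · simp [hjg] at hj
      · simp only [if_neg hjg] at hj
        have hyg : ¬ (y : ℕ) < g := fun hy => hjg (lt_trans hjy hy)
        simpa [T, hjg, hyg] using h.2 u j hj v y hjy
    · ext e
      simp only [moves, Finset.mem_filter, Finset.mem_univ, true_and, T]
      by_cases hg : (e.2 : ℕ) < g
      · erw [Finset.mem_filter]
        simp [hg, not_le.mpr hg]
      · erw [Finset.mem_filter]
        simp [hg, not_lt.mp hg]
end
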